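/- arXiv:2207.05564 — 2 statements merged into one kernel-verified Lean document; each statement's English description precedes it below -/
import Mathlib

section
/- Given a free tree T on n vertices, the expected sum of edge lengths in a uniformly random planar arrangement satisfies E_pl[D] = (1/n) Σ_{u∈V} E^1_pr[D | T^u], where E^1_pr[D | T^u] is the expected sum of edge lengths in a uniformly random projective arrangement of T rooted at u conditioned on u occupying position 1. -/
open Finset

attribute [local instance] Classical.propDecidable

/-- An arrangement `π` of the vertices of `G` is planar if no two edges cross. -/
def IsPlanarArr {n : ℕ} (G : SimpleGraph (Fin n)) (π : Equiv.Perm (Fin n)) : Prop :=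
  ∀ s t u v : Fin n, G.Adj s t → G.Adj u v →
    ¬ (π s < π u ∧ π u < π t ∧ π t < π v)

/-- An arrangement of `G` rooted at `r` is projective if it is planar and no edge covers `r`. -/
def IsProjectiveArr {n : ℕ} (G : SimpleGraph (Fin n)) (r : Fin n) (π : Equiv.Perm (Fin n)) : Prop :=
  IsPlanarArr G π ∧ ∀ s t : Fin n, G.Adj s t → ¬ (π s < π r ∧ π r < π t)

/-- The set of vertices of the subtree rooted at `u` when `G` is rooted at `r`. -/
noncomputable def subtreeFinset {n : ℕ} (G : SimpleGraph (Fin n)) (r u : Fin n) : Finset (Fin n) :=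
  univ.filter (fun v => G.dist r v = G.dist r u + G.dist u v)

/-- Directional size `s_r(u)`: size of the subtree rooted at `u` when `G` is rooted at `r`. -/
noncomputable def subtreeSize {n : ℕ} (G : SimpleGraph (Fin n)) (r u : Fin n) : ℕ :=
  (subtreeFinset G r u).card

/-- Out-degree (number of children) of `u` in `G` rooted at `r`. -/
noncomputable def outDeg {n : ℕ} (G : SimpleGraph (Fin n)) (r u : Fin n) : ℕ :=
  (univ.filter (fun v => G.Adj u v ∧ G.dist r v = G.dist r u + 1)).card

/-- The sum of edge lengths of `G` in the arrangement `π`. -/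
noncomputable def Dsum {n : ℕ} (G : SimpleGraph (Fin n)) (π : Equiv.Perm (Fin n)) : ℤ :=
  ∑ e ∈ G.edgeFinset,
    Sym2.lift ⟨fun u v => |((π u : ℕ) : ℤ) - ((π v : ℕ) : ℤ)|,
      fun u v => abs_sub_comm _ _⟩ e

/-- The set of planar arrangements of `G`. -/
noncomputable def planarSet {n : ℕ} (G : SimpleGraph (Fin n)) : Finset (Equiv.Perm (Fin n)) :=
  univ.filter (IsPlanarArr G)

/-- The set of projective arrangements of `G` rooted at `r`. -/
noncomputable def projSet {n : ℕ} (G : SimpleGraph (Fin n)) (r : Fin n) :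
    Finset (Equiv.Perm (Fin n)) :=
  univ.filter (IsProjectiveArr G r)

/-- The set of projective arrangements of `G` rooted at `r` with `r` in the first position. -/
noncomputable def projSet1 {n : ℕ} (G : SimpleGraph (Fin n)) (r : Fin n) :
    Finset (Equiv.Perm (Fin n)) :=
  univ.filter (fun π => IsProjectiveArr G r π ∧ (π r : ℕ) = 0)

section Helpers

variable {n : ℕ}

private lemma mod_split (x s : ℕ) (hx : x < n) (hs : s < n) :
    ((x + s) % n = x + s ∧ x + s < n) ∨ ((x + s) % n = x + s - n ∧ n ≤ x + s) := by
  rcases lt_or_ge (x + s) n with h | h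
  · exact Or.inl ⟨Nat.mod_eq_of_lt h, h⟩
  · refine Or.inr ⟨?_, h⟩
    rw [Nat.mod_eq_sub_mod h, Nat.mod_eq_of_lt (by omega)]

private lemma rot_lt_cases (hn : 0 < n) (r a b c d : Fin n)
    (h1 : a + r < b + r) (h2 : b + r < c + r) (h3 : c + r < d + r) :
    (a < b ∧ b < c ∧ c < d) ∨ (b < c ∧ c < d ∧ d < a) ∨
    (c < d ∧ d < a ∧ a < b) ∨ (d < a ∧ a < b ∧ b < c) := by
  have hr := r.isLt
  simp only [Fin.lt_def, Fin.val_add] at h1 h2 h3 ⊢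
  rcases mod_split a.val r.val a.isLt hr with ⟨e1, f1⟩ | ⟨e1, f1⟩ <;>
  rcases mod_split b.val r.val b.isLt hr with ⟨e2, f2⟩ | ⟨e2, f2⟩ <;>
  rcases mod_split c.val r.val c.isLt hr with ⟨e3, f3⟩ | ⟨e3, f3⟩ <;>
  rcases mod_split d.val r.val d.isLt hr with ⟨e4, f4⟩ | ⟨e4, f4⟩ <;>
  rw [e1, e2] at h1 <;> rw [e2, e3] at h2 <;> rw [e3, e4] at h3 <;> omega

private lemma planar_rot [NeZero n] (G : SimpleGraph (Fin n)) (π : Equiv.Perm (Fin n))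
    (r : Fin n) (h : IsPlanarArr G π) :
    IsPlanarArr G (π.trans (Equiv.addRight r)) := by
  have hn : 0 < n := Nat.pos_of_ne_zero (NeZero.ne n)
  intro s t u v hst huv hlt
  simp only [Equiv.trans_apply, Equiv.coe_addRight] at hlt
  obtain ⟨h1, h2, h3⟩ := hlt
  rcases rot_lt_cases hn r (π s) (π u) (π t) (π v) h1 h2 h3 with
    ⟨x, y, z⟩ | ⟨x, y, z⟩ | ⟨x, y, z⟩ | ⟨x, y, z⟩
  · exact h s t u v hst huv ⟨x, y, z⟩
  · exact h u v t s huv hst.symm ⟨x, y, z⟩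
  · exact h t s v u hst.symm huv.symm ⟨x, y, z⟩
  · exact h v u s t huv.symm hst ⟨x, y, z⟩

private lemma projSet1_eq (G : SimpleGraph (Fin n)) (u : Fin n) :
    projSet1 G u = (planarSet G).filter (fun π => (π u : ℕ) = 0) := by
  ext π
  simp only [projSet1, planarSet, mem_filter, mem_univ, true_and]
  constructor
  · rintro ⟨⟨hp, -⟩, h0⟩
    exact ⟨hp, h0⟩
  · rintro ⟨hp, h0⟩
    refine ⟨⟨hp, fun s t _ hc => ?_⟩, h0⟩
    have := hc.1
    rw [Fin.lt_def, h0] at this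
    omega

private lemma card_projSet1_eq [NeZero n] (G : SimpleGraph (Fin n)) (u v : Fin n) :
    (projSet1 G u).card = (projSet1 G v).card := by
  have key : ∀ (w w' : Fin n) (π : Equiv.Perm (Fin n)),
      π ∈ projSet1 G w → π.trans (Equiv.addRight (-(π w'))) ∈ projSet1 G w' := by
    intro w w' π hπ
    rw [projSet1_eq, mem_filter] at hπ ⊢
    obtain ⟨hp, h0⟩ := hπ
    simp only [planarSet, mem_filter, mem_univ, true_and] at hp ⊢
    refine ⟨planar_rot G π _ hp, ?_⟩
    simp
  have pos0 : ∀ (w : Fin n) (π : Equiv.Perm (Fin n)), π ∈ projSet1 G w → π w = 0 := by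
    intro w π hπ
    rw [projSet1_eq, mem_filter] at hπ
    exact Fin.ext (by simpa using hπ.2)
  refine Finset.card_bij' (fun π _ => π.trans (Equiv.addRight (-(π v))))
    (fun σ _ => σ.trans (Equiv.addRight (-(σ u)))) (fun π hπ => key u v π hπ)
    (fun σ hσ => key v u σ hσ) ?_ ?_
  · intro π hπ
    have h0 := pos0 u π hπ
    refine Equiv.ext fun x => ?_
    simp only [Equiv.trans_apply, Equiv.coe_addRight, h0]
    abel
  · intro σ hσ
    have h0 := pos0 v σ hσ
    refine Equiv.ext fun x => ?_
    simp only [Equiv.trans_apply, Equiv.coe_addRight, h0]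
    abel

end Helpers

/-- `E_pl[D] = (1/n) Σ_u E¹_pr[D | T^u]`. -/
theorem expected_D_planar_eq_avg_fixed (n : ℕ) (G : SimpleGraph (Fin n)) (hT : G.IsTree) :
    (∑ π ∈ planarSet G, ((Dsum G π : ℤ) : ℚ)) / ((planarSet G).card : ℚ)
      = (1 / (n : ℚ)) * ∑ u : Fin n,
          (∑ π ∈ projSet1 G u, ((Dsum G π : ℤ) : ℚ)) / ((projSet1 G u).card : ℚ) := by
  have hne : Nonempty (Fin n) := hT.isConnected.nonempty
  have hn : 0 < n := Fin.pos hne.some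
  haveI : NeZero n := ⟨hn.ne'⟩
  set z : Fin n := ⟨0, hn⟩ with hz
  have hfiber : ∀ u : Fin n, projSet1 G u
      = (planarSet G).filter (fun π => π.symm z = u) := by
    intro u
    rw [projSet1_eq]
    ext π
    simp only [mem_filter]
    refine and_congr_right fun _ => ?_
    constructor
    · intro h0
      have : π u = z := Fin.ext (by rw [hz]; exact h0)
      rw [← this, Equiv.symm_apply_apply]
    · intro h
      rw [← h, Equiv.apply_symm_apply]
  have hsum : ∑ u : Fin n, ∑ π ∈ projSet1 G u, ((Dsum G π : ℤ) : ℚ)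
      = ∑ π ∈ planarSet G, ((Dsum G π : ℤ) : ℚ) := by
    simp_rw [hfiber]
    exact Finset.sum_fiberwise_of_maps_to (fun π _ => mem_univ _) _
  have hcard : (planarSet G).card = n * (projSet1 G z).card := by
    have h1 : ∑ u : Fin n, (projSet1 G u).card = (planarSet G).card := by
      simp_rw [hfiber]
      rw [Finset.sum_card_fiberwise_eq_card_filter]
      simp
    have h2 : ∀ u : Fin n, (projSet1 G u).card = (projSet1 G z).card :=
      fun u => card_projSet1_eq G u z
    calc (planarSet G).card = ∑ u : Fin n, (projSet1 G u).card := h1.symm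
      _ = ∑ _u : Fin n, (projSet1 G z).card := Finset.sum_congr rfl fun u _ => h2 u
      _ = n * (projSet1 G z).card := by simp [Finset.sum_const, mul_comm]
  rw [← hsum, hcard]
  have h3 : ∀ u : Fin n,
      (∑ π ∈ projSet1 G u, ((Dsum G π : ℤ) : ℚ)) / ((projSet1 G u).card : ℚ)
      = (∑ π ∈ projSet1 G u, ((Dsum G π : ℤ) : ℚ)) / ((projSet1 G z).card : ℚ) := by
    intro u
    rw [card_projSet1_eq G u z]
  rw [Finset.sum_congr rfl fun u _ => h3 u, ← Finset.sum_div]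
  rw [one_div, inv_mul_eq_div, div_div, Nat.cast_mul, mul_comm ((projSet1 G z).card : ℚ)]
end

section
/- For a free tree T rooted at r ∈ {u,v} with uv an edge incident to the root, the expected length of uv in a uniformly random projective arrangement conditioned on π(r)=1 equals n/2. -/
open Finset

attribute [local instance] Classical.propDecidable

private lemma lex_append_single {α : Type*} [LT α] (P : List α) (a : α) :
    List.Lex (· < ·) P (P ++ [a]) := by
  induction P with
  | nil => exact List.Lex.nil
  | cons p P ih => exact List.Lex.cons ih

private lemma lex_key {α : Type*} [LinearOrder α] (P : List α) :
    ∀ (Q : List α) (a b : α), List.Lex (· < ·) P Q →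
    List.Lex (· < ·) Q (P ++ [a]) → ¬ List.Lex (· < ·) (P ++ [a]) (Q ++ [b]) := by
  induction P with
  | nil =>
    intro Q a b h1 h2 h3
    cases h1 with
    | nil =>
      cases h2 with
      | cons h2' => exact nomatch h2'
      | rel hlt =>
        cases h3 with
        | cons h3' => exact absurd hlt (lt_irrefl _)
        | rel h => exact absurd (hlt.trans h) (lt_irrefl _)
  | cons p P ih =>
    intro Q a b h1 h2 h3
    cases h1 with
    | rel hpq =>
      cases h2 with
      | rel h => exact absurd (hpq.trans h) (lt_irrefl _)
      | cons h => exact absurd hpq (lt_irrefl _)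
    | cons h1' =>
      cases h2 with
      | rel h => exact absurd h (lt_irrefl _)
      | cons h2' =>
        cases h3 with
        | rel h => exact absurd h (lt_irrefl _)
        | cons h3' => exact ih _ a b h1' h2' h3'

private lemma concat_isPath' {V : Type*} {G : SimpleGraph V} {u v t : V}
    (p : G.Walk u v) (h : G.Adj v t) (hp : p.IsPath) (ht : t ∉ p.support) :
    (p.concat h).IsPath := by
  rw [← SimpleGraph.Walk.isPath_reverse_iff, SimpleGraph.Walk.reverse_concat]
  exact hp.reverse.cons (by simpa [SimpleGraph.Walk.support_reverse] using ht)

private lemma projSet1_nonempty {n : ℕ} (G : SimpleGraph (Fin n)) (hT : G.IsTree) (r : Fin n) :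
    (projSet1 G r).Nonempty := by
  classical
  choose f hf hf2 using hT.existsUnique_path r
  set key : Fin n → List (Fin n) := fun v => (f v).support with hkeydef
  have hglast : ∀ x : Fin n, (key x).getLast? = some x := by
    intro x
    rw [List.getLast?_eq_getLast (l := key x) (by simp [hkeydef]), (f x).getLast_support]
  have hinj : Function.Injective key := by
    intro u v h
    have h1 := hglast u
    rw [h, hglast v] at h1
    exact (Option.some_injective _ h1).symm
  have hstart : ∀ v, key v = r :: (key v).tail := fun v => (f v).support_eq_cons
  have hkr : key r = [r] := by
    have : (SimpleGraph.Walk.nil : G.Walk r r) = f r := hf2 r .nil SimpleGraph.Walk.IsPath.nil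
    simp [hkeydef, ← this]
  have hedge : ∀ {s t : Fin n}, G.Adj s t → key t = key s ++ [t] ∨ key s = key t ++ [s] := by
    intro s t h
    by_cases ht : t ∈ (f s).support
    · right
      have hsplit := SimpleGraph.Walk.take_spec (f s) ht
      have htake : ((f s).takeUntil t ht).IsPath := (hf s).takeUntil ht
      have hdrop : ((f s).dropUntil t ht).IsPath := (hf s).dropUntil ht
      obtain ⟨p0, -, hp0u⟩ := hT.existsUnique_path t s
      have e1 : (f s).dropUntil t ht = SimpleGraph.Walk.cons h.symm .nil := by
        rw [hp0u _ hdrop, hp0u _ (SimpleGraph.Walk.IsPath.nil.cons (by simp [h.ne']))]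
      have e2 : (f s).takeUntil t ht = f t := hf2 t _ htake
      calc key s = (((f s).takeUntil t ht).append ((f s).dropUntil t ht)).support := by
            rw [hsplit]
        _ = key t ++ [s] := by
            rw [SimpleGraph.Walk.support_append, e1, e2]
            rfl
    · left
      have hP : ((f s).concat h).IsPath := concat_isPath' _ h (hf s) ht
      have e : (f s).concat h = f t := hf2 t _ hP
      calc key t = ((f s).concat h).support := by rw [e]
        _ = key s ++ [t] := by rw [SimpleGraph.Walk.support_concat]
  -- rank
  have hsub : ∀ v : Fin n, (univ.filter (fun u => key u < key v)) ⊆ univ.erase v := by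
    intro v u hu
    simp only [mem_filter, mem_univ, true_and] at hu
    exact mem_erase.2 ⟨fun h => absurd (h ▸ hu) (lt_irrefl _), mem_univ _⟩
  have hR : ∀ v : Fin n, (univ.filter (fun u => key u < key v)).card < n := by
    intro v
    calc (univ.filter (fun u => key u < key v)).card ≤ (univ.erase v).card :=
          card_le_card (hsub v)
      _ < n := by
          have hn : 0 < n := v.pos
          rw [card_erase_of_mem (mem_univ v), card_univ, Fintype.card_fin]; omega
  let e : Fin n → Fin n := fun v => ⟨_, hR v⟩
  have hmono : ∀ {a b : Fin n}, key a < key b → e a < e b := by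
    intro a b h
    have hss : (univ.filter (fun u => key u < key a)) ⊂ (univ.filter (fun u => key u < key b)) := by
      refine ⟨fun x hx => ?_, fun hcon => ?_⟩
      · simp only [mem_filter, mem_univ, true_and] at hx ⊢
        exact hx.trans h
      · have : a ∈ univ.filter (fun u => key u < key a) :=
          hcon (by simp only [mem_filter, mem_univ, true_and]; exact h)
        simp only [mem_filter, mem_univ, true_and] at this
        exact absurd this (lt_irrefl _)
    exact card_lt_card hss
  have einj : Function.Injective e := by
    intro a b h
    rcases lt_trichotomy (key a) (key b) with h' | h' | h'
    · exact absurd (h ▸ hmono h') (lt_irrefl _)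
    · exact hinj h'
    · exact absurd (h ▸ hmono h') (lt_irrefl _)
  let π : Equiv.Perm (Fin n) :=
    Equiv.ofBijective e ((Fintype.bijective_iff_injective_and_card e).2 ⟨einj, rfl⟩)
  have hπ : ∀ x, π x = e x := fun _ => rfl
  have hlt : ∀ {a b : Fin n}, π a < π b → key a < key b := by
    intro a b h
    rw [hπ, hπ] at h
    rcases lt_trichotomy (key a) (key b) with h' | h' | h'
    · exact h'
    · exact absurd (hinj h' ▸ h) (lt_irrefl _)
    · exact absurd h (not_lt.mpr (hmono h').le)
  have hr0 : (π r : ℕ) = 0 := by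
    rw [hπ]
    show (univ.filter (fun u => key u < key r)).card = 0
    rw [card_eq_zero, filter_eq_empty_iff]
    intro u _
    intro hu
    have hu' : List.Lex (· < ·) (key u) [r] := hkr ▸ hu
    rw [hstart u] at hu'
    cases hu' with
    | rel h => exact absurd h (lt_irrefl _)
    | cons h => exact (fun {l : List (Fin n)} (h : List.Lex (· < ·) l []) => nomatch h) h
  have hplan : IsPlanarArr G π := by
    rintro s t u v hst huv ⟨h1, h2, h3⟩
    have k1 : key s < key u := hlt h1
    have k2 : key u < key t := hlt h2
    have k3 : key t < key v := hlt h3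
    have hst' : key t = key s ++ [t] := by
      rcases hedge hst with h | h
      · exact h
      · exfalso
        have hts : key t < key s := by
          rw [h]; exact lex_append_single (key t) s
        exact absurd (k1.trans k2) (not_lt.mpr hts.le)
    have huv' : key v = key u ++ [v] := by
      rcases hedge huv with h | h
      · exact h
      · exfalso
        have hvu : key v < key u := by
          rw [h]; exact lex_append_single (key v) u
        exact absurd (k2.trans k3) (not_lt.mpr hvu.le)
    exact lex_key (key s) (key u) t v k1 (by rw [← hst']; exact k2)
      (by rw [← hst', ← huv']; exact k3)
  refine ⟨π, ?_⟩
  simp only [projSet1, mem_filter, mem_univ, true_and]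
  refine ⟨⟨hplan, ?_⟩, hr0⟩
  rintro s t hst ⟨c1, -⟩
  have : (π s : ℕ) < (π r : ℕ) := c1
  omega

/-- For an edge incident to the root `r`, the expected edge length in a uniformly random
projective arrangement conditioned on `π(r) = 1` equals `n/2`. -/
theorem expected_root_edge_length_fixed (n : ℕ) (G : SimpleGraph (Fin n)) (hT : G.IsTree)
    (r w : Fin n) (hrw : G.Adj r w) :
    (∑ π ∈ projSet1 G r, ((|((π r : ℕ) : ℤ) - ((π w : ℕ) : ℤ)| : ℤ) : ℚ))
        / ((projSet1 G r).card : ℚ)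
      = (n : ℚ) / 2 := by
  classical
  haveI : NeZero n := ⟨r.pos.ne'⟩
  have hmem : ∀ {π : Equiv.Perm (Fin n)}, π ∈ projSet1 G r →
      IsPlanarArr G π ∧ π r = 0 := by
    intro π hπ
    simp only [projSet1, mem_filter, mem_univ, true_and] at hπ
    exact ⟨hπ.1.1, Fin.ext (by simpa using hπ.2)⟩
  let F : Equiv.Perm (Fin n) → Equiv.Perm (Fin n) := fun π => π.trans (Equiv.neg (Fin n))
  have hFapp : ∀ π x, F π x = -(π x) := fun π x => rfl
  have hFF : ∀ π, F (F π) = π := by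
    intro π
    exact Equiv.ext fun x => neg_neg (π x)
  have hnegval : ∀ a : Fin n, a ≠ 0 → ((-a : Fin n) : ℕ) = n - (a : ℕ) ∧ 0 < (a : ℕ) := by
    intro a ha
    have h1 : (a : ℕ) ≠ 0 := fun h' => ha (Fin.ext (by simpa using h'))
    have h2 := a.is_lt
    refine ⟨?_, by omega⟩
    rw [Fin.coe_neg, Nat.mod_eq_of_lt (by omega)]
  have hFmem : ∀ {π}, π ∈ projSet1 G r → F π ∈ projSet1 G r := by
    intro π hπ
    obtain ⟨hplan, hr0⟩ := hmem hπ
    have hzero : ∀ x : Fin n, π x ≠ 0 ↔ x ≠ r := by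
      intro x
      constructor
      · intro h h'; exact h (h' ▸ hr0)
      · intro h h'; exact h (π.injective (h'.trans hr0.symm))
    have hFr : F π r = 0 := by rw [hFapp, hr0, neg_zero]
    have hB : ∀ x : Fin n, x ≠ r →
        ((F π x : Fin n) : ℕ) = n - ((π x : Fin n) : ℕ) ∧ 0 < ((π x : Fin n) : ℕ) := by
      intro x hx
      exact hnegval (π x) ((hzero x).2 hx)
    simp only [projSet1, mem_filter, mem_univ, true_and]
    refine ⟨⟨?_, ?_⟩, by rw [hFr]; rfl⟩
    · rintro s t u v hst huv ⟨h1, h2, h3⟩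
      rw [Fin.lt_def] at h1 h2 h3
      have hAr : ((π r : Fin n) : ℕ) = 0 := by rw [hr0]; rfl
      by_cases hu : u = r
      · subst hu; rw [hFr] at h1; simp at h1
      by_cases ht : t = r
      · subst ht; rw [hFr] at h2; simp at h2
      by_cases hv : v = r
      · subst hv; rw [hFr] at h3; simp at h3
      obtain ⟨hBu, hAu⟩ := hB u hu
      obtain ⟨hBt, hAt⟩ := hB t ht
      obtain ⟨hBv, hAv⟩ := hB v hv
      have hu' := (π u).is_lt
      have ht' := (π t).is_lt
      have hv' := (π v).is_lt
      by_cases hs : s = r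
      · subst hs
        rw [hFr] at h1
        refine hplan s t v u hst huv.symm ⟨?_, ?_, ?_⟩ <;> rw [Fin.lt_def] <;> omega
      · obtain ⟨hBs, hAs⟩ := hB s hs
        have hs' := (π s).is_lt
        refine hplan v u t s huv.symm hst.symm ⟨?_, ?_, ?_⟩ <;> rw [Fin.lt_def] <;> omega
    · rintro s t hst ⟨c1, -⟩
      rw [hFr, Fin.lt_def] at c1
      simp at c1
  have hwr : w ≠ r := hrw.ne'
  have hrepl : ∀ π ∈ projSet1 G r,
      ((|((π r : ℕ) : ℤ) - ((π w : ℕ) : ℤ)| : ℤ) : ℚ) = (((π w : Fin n) : ℕ) : ℚ) := by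
    intro π hπ
    obtain ⟨-, hr0⟩ := hmem hπ
    rw [hr0]
    push_cast
    simp [abs_of_nonneg]
  rw [Finset.sum_congr rfl hrepl]
  have hswap : (∑ π ∈ projSet1 G r, (((π w : Fin n) : ℕ) : ℚ))
      = ∑ π ∈ projSet1 G r, (((F π w : Fin n) : ℕ) : ℚ) := by
    refine Finset.sum_nbij' F F (fun π h => hFmem h) (fun π h => hFmem h)
      (fun π _ => hFF π) (fun π _ => hFF π) (fun π h => by rw [hFF])
  have h2T : (∑ π ∈ projSet1 G r, (((π w : Fin n) : ℕ) : ℚ))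
      + (∑ π ∈ projSet1 G r, (((π w : Fin n) : ℕ) : ℚ))
      = ((projSet1 G r).card : ℚ) * n := by
    nth_rewrite 2 [hswap]
    rw [← Finset.sum_add_distrib]
    have : ∀ π ∈ projSet1 G r,
        (((π w : Fin n) : ℕ) : ℚ) + (((F π w : Fin n) : ℕ) : ℚ) = (n : ℚ) := by
      intro π hπ
      obtain ⟨-, hr0⟩ := hmem hπ
      have hne : π w ≠ 0 := fun h' => hwr (π.injective (h'.trans hr0.symm))
      obtain ⟨hb, ha⟩ := hnegval (π w) hne
      have hlt := (π w).is_lt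
      rw [show ((F π w : Fin n) : ℕ) = n - ((π w : Fin n) : ℕ) from hb,
        Nat.cast_sub hlt.le]
      ring
    rw [Finset.sum_congr rfl this, Finset.sum_const, nsmul_eq_mul]
  have hcard : ((projSet1 G r).card : ℚ) ≠ 0 := by
    have hne := projSet1_nonempty G hT r
    exact Nat.cast_ne_zero.mpr (card_ne_zero.mpr hne)
  field_simp
  linarith
end
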